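/- Let σ > 0, λ > 0, p ∈ ℝ, and let φ(v) = (1/(2σ√π))·exp(−v²/(4σ²)) be the density of the Gaussian distribution N(0, 2σ²). Then ∫_ℝ |p·(φ(v+2λ) + φ(v−2λ) − 2φ(v))|² dv = (p²/(2√(2π)·σ))·(6 + 2·exp(−4λ²/(2σ²)) − 8·exp(−λ²/(2σ²))). -/

import Mathlib

open MeasureTheory Real

lemma gauss_shift_integrable (b m : ℝ) (hb : 0 < b) :
    Integrable (fun v : ℝ => Real.exp (-b * (v - m)^2)) := by
  simpa using (integrable_exp_neg_mul_sq hb).comp_sub_right m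

lemma gauss_shift_integral (b m : ℝ) (hb : 0 < b) :
    ∫ v : ℝ, Real.exp (-b * (v - m)^2) = Real.sqrt (Real.pi / b) := by
  rw [← integral_gaussian b]
  exact integral_sub_right_eq_self (fun v => Real.exp (-b * v^2)) m

noncomputable def P (σ a b v : ℝ) : ℝ :=
  Real.exp (-(v - a)^2 / (4*σ^2)) * Real.exp (-(v - b)^2 / (4*σ^2))

lemma prod_eq (σ a b : ℝ) (hσ : 0 < σ) (v : ℝ) :
    P σ a b v = Real.exp (-(a-b)^2/(8*σ^2)) * Real.exp (-(1/(2*σ^2)) * (v - (a+b)/2)^2) := by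
  rw [P, ← Real.exp_add, ← Real.exp_add]
  congr 1
  have h : σ^2 ≠ 0 := by positivity
  field_simp
  ring

lemma prod_integrable (σ a b : ℝ) (hσ : 0 < σ) :
    Integrable (fun v : ℝ => P σ a b v) := by
  have : (fun v : ℝ => P σ a b v)
      = fun v => Real.exp (-(a-b)^2/(8*σ^2)) * Real.exp (-(1/(2*σ^2)) * (v - (a+b)/2)^2) :=
    funext (prod_eq σ a b hσ)
  rw [this]
  exact (gauss_shift_integrable _ _ (by positivity)).const_mul _

lemma prod_integral (σ a b : ℝ) (hσ : 0 < σ) :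
    ∫ v : ℝ, P σ a b v = σ * Real.sqrt (2*Real.pi) * Real.exp (-(a-b)^2/(8*σ^2)) := by
  simp_rw [prod_eq σ a b hσ]
  rw [MeasureTheory.integral_const_mul, gauss_shift_integral _ _ (by positivity)]
  have h1 : Real.pi / (1/(2*σ^2)) = σ^2 * (2*Real.pi) := by
    field_simp
  rw [h1, Real.sqrt_mul (sq_nonneg σ), Real.sqrt_sq hσ.le]
  ring



/-- Equation (11) of the paper: squared L²-distance between the Gaussian density and
the three-component Gaussian-mixture perturbation coming from modulo folds. -/
theorem mixture_L2_distance
    (σ lam p : ℝ) (hσ : 0 < σ) (hlam : 0 < lam) :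
    (∫ v : ℝ,
        |p * (((1 / (2 * σ * Real.sqrt Real.pi)) * Real.exp (-(v + 2 * lam) ^ 2 / (4 * σ ^ 2)))
            + ((1 / (2 * σ * Real.sqrt Real.pi)) * Real.exp (-(v - 2 * lam) ^ 2 / (4 * σ ^ 2)))
            - 2 * ((1 / (2 * σ * Real.sqrt Real.pi)) * Real.exp (-v ^ 2 / (4 * σ ^ 2))))| ^ 2)
      = (p ^ 2 / (2 * Real.sqrt (2 * Real.pi) * σ)) *
          (6 + 2 * Real.exp (-(4 * lam ^ 2) / (2 * σ ^ 2))
            - 8 * Real.exp (-(lam ^ 2) / (2 * σ ^ 2))) := by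
  have hfun : (fun v : ℝ =>
        |p * (((1 / (2 * σ * Real.sqrt Real.pi)) * Real.exp (-(v + 2 * lam) ^ 2 / (4 * σ ^ 2)))
            + ((1 / (2 * σ * Real.sqrt Real.pi)) * Real.exp (-(v - 2 * lam) ^ 2 / (4 * σ ^ 2)))
            - 2 * ((1 / (2 * σ * Real.sqrt Real.pi)) * Real.exp (-v ^ 2 / (4 * σ ^ 2))))| ^ 2)
      = fun v : ℝ => (p ^ 2 * (1 / (2 * σ * Real.sqrt Real.pi)) ^ 2) *
          (((((P σ (-(2*lam)) (-(2*lam)) v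
            + P σ (2*lam) (2*lam) v)
            + 4 * P σ 0 0 v)
            + 2 * P σ (-(2*lam)) (2*lam) v)
            - 4 * P σ (-(2*lam)) 0 v)
            - 4 * P σ (2*lam) 0 v) := by
    funext v
    simp only [P]
    rw [sq_abs, show (v + 2*lam)^2 = (v - -(2*lam))^2 from by ring,
       show v^2 = (v - (0:ℝ))^2 from by ring]
    ring
  rw [hfun, MeasureTheory.integral_const_mul]
  have iA := prod_integrable σ (-(2*lam)) (-(2*lam)) hσ
  have iB := prod_integrable σ (2*lam) (2*lam) hσ
  have iC := prod_integrable σ 0 0 hσ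
  have iD := prod_integrable σ (-(2*lam)) (2*lam) hσ
  have iE := prod_integrable σ (-(2*lam)) 0 hσ
  have iF := prod_integrable σ (2*lam) 0 hσ
  have h1 : Integrable (fun v : ℝ => P σ (-(2*lam)) (-(2*lam)) v + P σ (2*lam) (2*lam) v) :=
    iA.add iB
  have h2 : Integrable (fun v : ℝ => (P σ (-(2*lam)) (-(2*lam)) v + P σ (2*lam) (2*lam) v)
      + 4 * P σ 0 0 v) := h1.add (iC.const_mul 4)
  have h3 : Integrable (fun v : ℝ => ((P σ (-(2*lam)) (-(2*lam)) v + P σ (2*lam) (2*lam) v)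
      + 4 * P σ 0 0 v) + 2 * P σ (-(2*lam)) (2*lam) v) := h2.add (iD.const_mul 2)
  have h4 : Integrable (fun v : ℝ => (((P σ (-(2*lam)) (-(2*lam)) v + P σ (2*lam) (2*lam) v)
      + 4 * P σ 0 0 v) + 2 * P σ (-(2*lam)) (2*lam) v) - 4 * P σ (-(2*lam)) 0 v) :=
    h3.sub (iE.const_mul 4)
  rw [integral_sub h4 (iF.const_mul 4), integral_sub h3 (iE.const_mul 4),
      integral_add h2 (iD.const_mul 2), integral_add h1 (iC.const_mul 4),
      integral_add iA iB,
      MeasureTheory.integral_const_mul, MeasureTheory.integral_const_mul,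
      MeasureTheory.integral_const_mul, MeasureTheory.integral_const_mul,
      prod_integral σ (-(2*lam)) (-(2*lam)) hσ, prod_integral σ (2*lam) (2*lam) hσ,
      prod_integral σ 0 0 hσ, prod_integral σ (-(2*lam)) (2*lam) hσ,
      prod_integral σ (-(2*lam)) 0 hσ, prod_integral σ (2*lam) 0 hσ]
  rw [show (-(-(2*lam) - -(2*lam))^2 / (8*σ^2)) = (0:ℝ) from by ring,
      show (-(2*lam - 2*lam)^2 / (8*σ^2)) = (0:ℝ) from by ring,
      show (-((0:ℝ) - 0)^2 / (8*σ^2)) = (0:ℝ) from by ring,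
      show (-(-(2*lam) - 2*lam)^2 / (8*σ^2)) = -(4 * lam ^ 2) / (2 * σ ^ 2) from by ring,
      show (-(-(2*lam) - 0)^2 / (8*σ^2)) = -(lam ^ 2) / (2 * σ ^ 2) from by ring,
      show (-(2*lam - 0)^2 / (8*σ^2)) = -(lam ^ 2) / (2 * σ ^ 2) from by ring,
      Real.exp_zero]
  have hcoef : (1 / (2*σ*Real.sqrt Real.pi)) ^ 2 * (σ * Real.sqrt (2*Real.pi))
      = 1 / (2 * Real.sqrt (2*Real.pi) * σ) := by
    have hπ : Real.sqrt Real.pi ^ 2 = Real.pi := Real.sq_sqrt Real.pi_nonneg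
    have h2π : Real.sqrt (2*Real.pi) ^ 2 = 2*Real.pi := Real.sq_sqrt (by positivity)
    have e1 : Real.sqrt Real.pi ≠ 0 := by positivity
    have e2 : Real.sqrt (2*Real.pi) ≠ 0 := by positivity
    have e3 : σ ≠ 0 := hσ.ne'
    have h2 : Real.sqrt 2 ^ 2 = 2 := Real.sq_sqrt (by norm_num)
    field_simp
    linear_combination h2π - 2 * hπ
  linear_combination (p ^ 2 * (6 + 2 * Real.exp (-(4 * lam ^ 2) / (2 * σ ^ 2))
      - 8 * Real.exp (-(lam ^ 2) / (2 * σ ^ 2)))) * hcoef
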